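/- Let f : (0, ∞) → ℝ be concave, superadditive, and satisfy liminf_{x → 0⁺} f(x) ≥ 0. Then f(x) = c x for some constant c, i.e., f is linear. -/

import Mathlib

lemma keyB_aux (f : ℝ → ℝ)
    (hconc : ConcaveOn ℝ (Set.Ioi (0 : ℝ)) f)
    (hliminf : ∀ ε : ℝ, 0 < ε → ∀ᶠ x in nhdsWithin 0 (Set.Ioi (0 : ℝ)), -ε ≤ f x) :
    ∀ a b : ℝ, 0 < a → a < b → a * f b ≤ b * f a := by
  intro a b ha hab
  have hb : 0 < b := ha.trans hab
  have key : ∀ δ : ℝ, 0 < δ → a * f b - (b - a) * δ ≤ b * f a := by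
    intro δ hδ
    have hev : ∀ᶠ ε in nhdsWithin 0 (Set.Ioi (0:ℝ)),
        (a - ε) * f b - (b - a) * δ ≤ (b - ε) * f a := by
      filter_upwards [hliminf δ hδ, Ioo_mem_nhdsGT_of_mem (Set.left_mem_Ico.2 ha)]
        with ε hfε hεa
      have hε0 : 0 < ε := hεa.1
      have hεa' : ε < a := hεa.2
      have hbe : 0 < b - ε := by linarith
      have hpt : (a - ε)/(b - ε) * b + (b - a)/(b - ε) * ε = a := by
        field_simp
        ring
      have hsum : (a - ε)/(b - ε) + (b - a)/(b - ε) = 1 := by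
        field_simp
        ring
      have hcc := hconc.2 (Set.mem_Ioi.2 hb) (Set.mem_Ioi.2 hε0)
        (div_nonneg (by linarith) hbe.le) (div_nonneg (by linarith) hbe.le) hsum
      simp only [smul_eq_mul, hpt] at hcc
      rw [div_mul_eq_mul_div, div_mul_eq_mul_div, ← add_div, div_le_iff₀ hbe] at hcc
      have h2 : (b - a) * (-δ) ≤ (b - a) * f ε :=
        mul_le_mul_of_nonneg_left hfε (by linarith)
      nlinarith [hcc, h2]
    have t1 : Filter.Tendsto (fun ε : ℝ => (a - ε) * f b - (b - a) * δ)
        (nhdsWithin 0 (Set.Ioi (0:ℝ))) (nhds (a * f b - (b - a) * δ)) := by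
      have hc : Continuous fun ε : ℝ => (a - ε) * f b - (b - a) * δ := by continuity
      simpa using (hc.tendsto 0).mono_left nhdsWithin_le_nhds
    have t2 : Filter.Tendsto (fun ε : ℝ => (b - ε) * f a)
        (nhdsWithin 0 (Set.Ioi (0:ℝ))) (nhds (b * f a)) := by
      have hc : Continuous fun ε : ℝ => (b - ε) * f a := by continuity
      simpa using (hc.tendsto 0).mono_left nhdsWithin_le_nhds
    exact le_of_tendsto_of_tendsto t1 t2 hev
  by_contra h
  push_neg at h
  have hba : 0 < b - a := by linarith
  have hd : 0 < (a * f b - b * f a) / (2 * (b - a)) := div_pos (by linarith) (by linarith)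
  have hk := key _ hd
  have h2 : (b - a) * ((a * f b - b * f a) / (2 * (b - a))) = (a * f b - b * f a) / 2 := by
    field_simp
  linarith [hk, h2.le, h2.ge]

theorem stmt_11 (f : ℝ → ℝ)
    (hconc : ConcaveOn ℝ (Set.Ioi (0 : ℝ)) f)
    (hsup : ∀ x y : ℝ, 0 < x → 0 < y → f (x + y) ≥ f x + f y)
    (hliminf : ∀ ε : ℝ, 0 < ε → ∀ᶠ x in nhdsWithin 0 (Set.Ioi (0 : ℝ)), -ε ≤ f x) :
    ∃ c : ℝ, ∀ x : ℝ, 0 < x → f x = c * x := by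
  have keyB : ∀ a b : ℝ, 0 < a → a ≤ b → a * f b ≤ b * f a := by
    intro a b ha hab
    rcases eq_or_lt_of_le hab with rfl | h
    · exact le_rfl
    · exact keyB_aux f hconc hliminf a b ha h
  have hadd : ∀ x y : ℝ, 0 < x → 0 < y → f (x + y) = f x + f y := by
    intro x y hx hy
    have h1 : x * f (x + y) ≤ (x + y) * f x := keyB x (x + y) hx (by linarith)
    have h2 : y * f (x + y) ≤ (x + y) * f y := keyB y (x + y) hy (by linarith)
    have h3 : f (x + y) ≤ f x + f y := by
      have hxy : 0 < x + y := by linarith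
      nlinarith [h1, h2]
    linarith [hsup x y hx hy]
  have hpow : ∀ (n : ℕ) (x : ℝ), 0 < x → f (2 ^ n * x) = 2 ^ n * f x := by
    intro n
    induction n with
    | zero => intro x hx; simp
    | succ n ih =>
      intro x hx
      have hpx : (0:ℝ) < 2 ^ n * x := by positivity
      have : (2:ℝ) ^ (n+1) * x = 2 ^ n * x + 2 ^ n * x := by ring
      rw [this, hadd _ _ hpx hpx, ih x hx]
      ring
  refine ⟨f 1, fun x hx => ?_⟩
  -- choose n with 1 ≤ 2^n * x
  obtain ⟨n, hn⟩ := pow_unbounded_of_one_lt (1/x) (by norm_num : (1:ℝ) < 2)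
  have hn' : 1 ≤ 2 ^ n * x := by
    rw [div_lt_iff₀ hx] at hn
    nlinarith
  obtain ⟨m, hm⟩ := pow_unbounded_of_one_lt x (by norm_num : (1:ℝ) < 2)
  have hm' : x ≤ 2 ^ m * 1 := by
    rw [mul_one]; exact hm.le
  -- f x ≤ x * f 1
  have i1 : 1 * f (2 ^ n * x) ≤ (2 ^ n * x) * f 1 := keyB 1 (2 ^ n * x) one_pos hn'
  rw [hpow n x hx] at i1
  have hp2n : (0:ℝ) < 2 ^ n := by positivity
  have le1 : f x ≤ x * f 1 := by nlinarith
  -- x * f 1 ≤ f x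
  have i2 : x * f (2 ^ m * 1) ≤ (2 ^ m * 1) * f x := keyB x (2 ^ m * 1) hx hm'
  rw [hpow m 1 one_pos] at i2
  have hp2m : (0:ℝ) < 2 ^ m := by positivity
  have le2 : x * f 1 ≤ f x := by nlinarith
  linarith
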